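/- arXiv:2411.15194 — 2 statements merged into one kernel-verified Lean document; each statement's English description precedes it below -/
import Mathlib

section
/- Rule R9 (variable inclusion) is locally complete: for distinct variables X, Y, a fresh variable X', and words u, v over Σ ∪ Γ, if the equation (X'·u)[X ↦ Y·X'] = v[X ↦ Y·X'] is satisfiable, then the equation X·u = Y·v is satisfiable. -/
/-- Extension of a substitution `h : Γ → Σ*` to a monoid homomorphism on words over `Σ ∪ Γ`
that fixes letters of the alphabet. -/
def applySub {A V : Type} (h : V → List A) (u : List (A ⊕ V)) : List A :=
  u.flatMap (Sum.elim (fun a => [a]) h)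

/-- Homomorphic replacement `u[X ↦ w]` of the variable `X` by the word `w` in `u`. -/
def repl {A V : Type} [DecidableEq V] (X : V) (w : List (A ⊕ V)) (u : List (A ⊕ V)) :
    List (A ⊕ V) :=
  u.flatMap (Sum.elim (fun a => [Sum.inl a]) (fun Y => if Y = X then w else [Sum.inr Y]))

lemma applySub_cons {A V : Type} (h : V → List A) (a : A ⊕ V) (t : List (A ⊕ V)) :
    applySub h (a :: t) = Sum.elim (fun a => [a]) h a ++ applySub h t := by
  simp [applySub]

lemma repl_cons {A V : Type} [DecidableEq V] (X : V) (w : List (A ⊕ V)) (a : A ⊕ V)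
    (t : List (A ⊕ V)) :
    repl X w (a :: t) =
      Sum.elim (fun a => [Sum.inl a]) (fun Y => if Y = X then w else [Sum.inr Y]) a
        ++ repl X w t := by
  simp [repl]

lemma applySub_append {A V : Type} (h : V → List A) (s t : List (A ⊕ V)) :
    applySub h (s ++ t) = applySub h s ++ applySub h t := by
  simp [applySub]

lemma applySub_update {A V : Type} [DecidableEq V] (h : V → List A) (X Y X' : V)
    (w : List (A ⊕ V)) :
    applySub (Function.update h X (h Y ++ h X')) w =
      applySub h (repl X [Sum.inr Y, Sum.inr X'] w) := by
  induction w with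
  | nil => rfl
  | cons a t ih =>
    rw [applySub_cons, repl_cons, applySub_append, ih]
    congr 1
    rcases a with a | Z
    · rfl
    · by_cases hZ : Z = X
      · subst hZ
        simp [applySub, Function.update_self]
      · simp [applySub, hZ, Function.update_of_ne hZ]

/-- Rule R9 (variable inclusion) is locally complete. -/
theorem stmt_7 {A V : Type} [DecidableEq V] (X Y X' : V) (u v : List (A ⊕ V))
    (hXY : X ≠ Y) (hX'X : X' ≠ X) (hX'Y : X' ≠ Y)
    (hX'u : Sum.inr X' ∉ u) (hX'v : Sum.inr X' ∉ v)
    (hsat : ∃ h : V → List A,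
      applySub h (repl X [Sum.inr Y, Sum.inr X'] (Sum.inr X' :: u)) =
        applySub h (repl X [Sum.inr Y, Sum.inr X'] v)) :
    ∃ h : V → List A, applySub h (Sum.inr X :: u) = applySub h (Sum.inr Y :: v) := by
  obtain ⟨h, hh⟩ := hsat
  refine ⟨Function.update h X (h Y ++ h X'), ?_⟩
  rw [repl_cons, applySub_append] at hh
  simp only [Sum.elim_inr, if_neg hX'X, applySub_cons, Sum.elim_inr,
    Function.update_self, Function.update_of_ne (Ne.symm hXY),
    applySub_update h X Y X'] at *
  simp only [applySub, repl, List.flatMap] at *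
  simp [Ne.symm hXY, hh, List.append_assoc] at *
  simp [hh]
end

section
/- Full case split for equations starting with two distinct variables: for distinct variables X, Y and words u, v over Σ ∪ Γ, the equation X·u = Y·v is satisfiable if and only if at least one of the following is satisfiable: (1) u[X ↦ Y] = v[X ↦ Y]; (2) (X'·u)[X ↦ Y·X'] = v[X ↦ Y·X'] for a fresh variable X'; (3) u[Y ↦ X·Y'] = (Y'·v)[Y ↦ X·Y'] for a fresh variable Y'. -/
lemma applySub_cons_inl {A V : Type} (h : V → List A) (a : A) (u : List (A ⊕ V)) :
    applySub h (Sum.inl a :: u) = a :: applySub h u := rfl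

lemma applySub_cons_inr {A V : Type} (h : V → List A) (Z : V) (u : List (A ⊕ V)) :
    applySub h (Sum.inr Z :: u) = h Z ++ applySub h u := rfl

lemma applySub_repl {A V : Type} [DecidableEq V] (h : V → List A) (X : V)
    (w u : List (A ⊕ V)) :
    applySub h (repl X w u) =
      applySub (fun Z => if Z = X then applySub h w else h Z) u := by
  induction u with
  | nil => rfl
  | cons a u ih =>
    cases a with
    | inl a => simpa [repl, applySub] using ih
    | inr Z =>
      by_cases hz : Z = X <;>
        simp [repl, applySub, hz] at ih ⊢ <;> simp [ih]

lemma applySub_congr {A V : Type} (h g : V → List A) (u : List (A ⊕ V))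
    (hc : ∀ Z, Sum.inr Z ∈ u → h Z = g Z) : applySub h u = applySub g u := by
  induction u with
  | nil => rfl
  | cons a u ih =>
    cases a with
    | inl a => simp [applySub_cons_inl, ih (fun Z hZ => hc Z (by simp [hZ]))]
    | inr Z =>
      rw [applySub_cons_inr, applySub_cons_inr, hc Z (by simp),
        ih (fun Z hZ => hc Z (by simp [hZ]))]

/-- Full case split for equations starting with two distinct variables. -/
theorem stmt_8 {A V : Type} [DecidableEq V] (X Y X' Y' : V) (u v : List (A ⊕ V))
    (hXY : X ≠ Y)
    (hX'X : X' ≠ X) (hX'Y : X' ≠ Y) (hX'u : Sum.inr X' ∉ u) (hX'v : Sum.inr X' ∉ v)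
    (hY'X : Y' ≠ X) (hY'Y : Y' ≠ Y) (hY'u : Sum.inr Y' ∉ u) (hY'v : Sum.inr Y' ∉ v) :
    (∃ h : V → List A, applySub h (Sum.inr X :: u) = applySub h (Sum.inr Y :: v)) ↔
      ((∃ h : V → List A,
          applySub h (repl X [Sum.inr Y] u) = applySub h (repl X [Sum.inr Y] v)) ∨
       (∃ h : V → List A,
          applySub h (repl X [Sum.inr Y, Sum.inr X'] (Sum.inr X' :: u)) =
            applySub h (repl X [Sum.inr Y, Sum.inr X'] v)) ∨
       (∃ h : V → List A,
          applySub h (repl Y [Sum.inr X, Sum.inr Y'] u) =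
            applySub h (repl Y [Sum.inr X, Sum.inr Y'] (Sum.inr Y' :: v)))) := by
  constructor
  · rintro ⟨h, heq⟩
    rw [applySub_cons_inr, applySub_cons_inr] at heq
    rcases List.append_eq_append_iff.mp heq with ⟨t, hYt, hu⟩ | ⟨t, hXt, hv⟩
    · -- h Y = h X ++ t, applySub h u = t ++ applySub h v : branch 3
      refine Or.inr (Or.inr ⟨Function.update h Y' t, ?_⟩)
      rw [applySub_repl, applySub_repl]
      set g : V → List A := fun Z =>
        if Z = Y then applySub (Function.update h Y' t) [Sum.inr X, Sum.inr Y'] else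
          Function.update h Y' t Z with hg
      have hgY' : g Y' = t := by simp [hg, hY'Y]
      have hgX : ∀ Z, Sum.inr Z ∈ u ∨ Sum.inr Z ∈ v → g Z = h Z := by
        intro Z hZ
        have hZY' : Z ≠ Y' := by
          rintro rfl; rcases hZ with h1 | h1 <;> [exact hY'u h1; exact hY'v h1]
        by_cases hZY : Z = Y
        · subst hZY
          simp [hg, applySub_cons_inr, applySub,
            Function.update_of_ne (Ne.symm hY'X), Function.update_self, hYt]
        · simp [hg, hZY, Function.update_of_ne hZY']
      have hgu : applySub g u = applySub h u :=
        applySub_congr _ _ u (fun Z hZ => hgX Z (Or.inl hZ))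
      have hgv : applySub g v = applySub h v :=
        applySub_congr _ _ v (fun Z hZ => hgX Z (Or.inr hZ))
      rw [applySub_cons_inr g Y' v, hgu, hgY', hgv, hu]
    · -- h X = h Y ++ t, applySub h v = t ++ applySub h u : branch 2
      refine Or.inr (Or.inl ⟨Function.update h X' t, ?_⟩)
      rw [applySub_repl, applySub_repl]
      set g : V → List A := fun Z =>
        if Z = X then applySub (Function.update h X' t) [Sum.inr Y, Sum.inr X'] else
          Function.update h X' t Z with hg
      have hgX' : g X' = t := by simp [hg, hX'X]
      have hgX : ∀ Z, Sum.inr Z ∈ u ∨ Sum.inr Z ∈ v → g Z = h Z := by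
        intro Z hZ
        have hZX' : Z ≠ X' := by
          rintro rfl; rcases hZ with h1 | h1 <;> [exact hX'u h1; exact hX'v h1]
        by_cases hZX : Z = X
        · subst hZX
          simp [hg, applySub_cons_inr, applySub,
            Function.update_of_ne (Ne.symm hX'Y), Function.update_self, hXt]
        · simp [hg, hZX, Function.update_of_ne hZX']
      have hgu : applySub g u = applySub h u :=
        applySub_congr _ _ u (fun Z hZ => hgX Z (Or.inl hZ))
      have hgv : applySub g v = applySub h v :=
        applySub_congr _ _ v (fun Z hZ => hgX Z (Or.inr hZ))
      rw [applySub_cons_inr g X' u, hgu, hgX', hgv, hv]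
  · rintro (⟨h, heq⟩ | ⟨h, heq⟩ | ⟨h, heq⟩)
    · -- branch 1 backwards
      rw [applySub_repl, applySub_repl] at heq
      refine ⟨fun Z => if Z = X then applySub h [Sum.inr Y] else h Z, ?_⟩
      set g : V → List A := fun Z => if Z = X then applySub h [Sum.inr Y] else h Z with hg
      have hgXY : g X = g Y := by simp [hg, hXY.symm, applySub, applySub_cons_inr]
      rw [applySub_cons_inr g X u, applySub_cons_inr g Y v, heq, hgXY]
    · -- branch 2 backwards
      rw [applySub_repl, applySub_repl] at heq
      refine ⟨fun Z => if Z = X then applySub h [Sum.inr Y, Sum.inr X'] else h Z, ?_⟩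
      set g : V → List A :=
        fun Z => if Z = X then applySub h [Sum.inr Y, Sum.inr X'] else h Z with hg
      have hgX : g X = g Y ++ g X' := by
        simp [hg, hXY.symm, hX'X, applySub, applySub_cons_inr]
      rw [applySub_cons_inr g X u, applySub_cons_inr g Y v, hgX, List.append_assoc]
      exact congrArg (g Y ++ ·) heq
    · -- branch 3 backwards
      rw [applySub_repl, applySub_repl] at heq
      refine ⟨fun Z => if Z = Y then applySub h [Sum.inr X, Sum.inr Y'] else h Z, ?_⟩
      set g : V → List A :=
        fun Z => if Z = Y then applySub h [Sum.inr X, Sum.inr Y'] else h Z with hg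
      have hgY : g Y = g X ++ g Y' := by
        simp [hg, hXY, hY'Y, applySub, applySub_cons_inr]
      rw [applySub_cons_inr g X u, applySub_cons_inr g Y v, hgY, List.append_assoc]
      exact congrArg (g X ++ ·) heq
end
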